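/- arXiv:2604.18766 — 2 statements merged into one kernel-verified Lean document; each statement's English description precedes it below -/
import Mathlib

section
/- For every n ≥ 0, k ≥ 1, every formula α, and every j with 1 ≤ j ≤ k: ⊢_{L_n^k} ∘^j α ↔ ∘^j ¬α. -/
/-- Formulas of the language with ¬, ∘, ∧, ∨, →. -/
inductive Fm : Type
  | atom : Nat → Fm
  | neg : Fm → Fm
  | circ : Fm → Fm
  | conj : Fm → Fm → Fm
  | disj : Fm → Fm → Fm
  | impl : Fm → Fm → Fm

/-- Iterated consistency operator: `circN n α` is ∘^n α. -/
def circN : Nat → Fm → Fm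
  | 0, a => a
  | n + 1, a => Fm.circ (circN n a)

/-- Biimplication α↔β := (α→β)∧(β→α). -/
def Fm.biim (a c : Fm) : Fm := (a.impl c).conj (c.impl a)

/-- Derivability from premises in the Hilbert calculus L_n^k:
L_n^0 := mbCciw + (cc^n) ∘^{n+2}α; L_n^1 := L_n^0 + (cf) + (ce); for k ≥ 2,
L_n^k := L_n^1 + (ip^j) ¬∘^j¬α ↔ ¬∘^jα for all 1 ≤ j < k. -/
inductive Lnk (n k : Nat) (Γ : Set Fm) : Fm → Prop
  | prem {α : Fm} : α ∈ Γ → Lnk n k Γ α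
  | a1 (α β : Fm) : Lnk n k Γ (α.impl (β.impl α))
  | a2 (α β γ : Fm) : Lnk n k Γ ((α.impl (β.impl γ)).impl ((α.impl β).impl (α.impl γ)))
  | a3 (α β : Fm) : Lnk n k Γ ((α.conj β).impl α)
  | a4 (α β : Fm) : Lnk n k Γ ((α.conj β).impl β)
  | a5 (α β : Fm) : Lnk n k Γ (α.impl (β.impl (α.conj β)))
  | a6 (α β : Fm) : Lnk n k Γ (α.impl (α.disj β))
  | a7 (α β : Fm) : Lnk n k Γ (β.impl (α.disj β))
  | a8 (α β γ : Fm) : Lnk n k Γ ((α.impl γ).impl ((β.impl γ).impl ((α.disj β).impl γ)))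
  | a9 (α β : Fm) : Lnk n k Γ (α.disj (α.impl β))
  | tnd (α : Fm) : Lnk n k Γ (α.disj α.neg)
  | bc1 (α β : Fm) : Lnk n k Γ (α.circ.impl (α.impl (α.neg.impl β)))
  | ciw (α : Fm) : Lnk n k Γ (α.circ.disj (α.conj α.neg))
  | ccn (α : Fm) : Lnk n k Γ (circN (n + 2) α)
  | cf (α : Fm) : 1 ≤ k → Lnk n k Γ (α.neg.neg.impl α)
  | ce (α : Fm) : 1 ≤ k → Lnk n k Γ (α.impl α.neg.neg)
  | ip (α : Fm) (j : Nat) : 1 ≤ j → j < k →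
      Lnk n k Γ (Fm.biim (circN j α.neg).neg (circN j α).neg)
  | mp {α β : Fm} : Lnk n k Γ (α.impl β) → Lnk n k Γ α → Lnk n k Γ β

namespace LnkAux

theorem weak {n k : Nat} {Γ Δ : Set Fm} {α : Fm} (hs : Γ ⊆ Δ) (h : Lnk n k Γ α) :
    Lnk n k Δ α := by
  induction h with
  | prem hm => exact .prem (hs hm)
  | a1 a b => exact .a1 a b
  | a2 a b c => exact .a2 a b c
  | a3 a b => exact .a3 a b
  | a4 a b => exact .a4 a b
  | a5 a b => exact .a5 a b
  | a6 a b => exact .a6 a b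
  | a7 a b => exact .a7 a b
  | a8 a b c => exact .a8 a b c
  | a9 a b => exact .a9 a b
  | tnd a => exact .tnd a
  | bc1 a b => exact .bc1 a b
  | ciw a => exact .ciw a
  | ccn a => exact .ccn a
  | cf a h => exact .cf a h
  | ce a h => exact .ce a h
  | ip a j h1 h2 => exact .ip a j h1 h2
  | mp _ _ ih1 ih2 => exact .mp ih1 ih2

theorem imp_id {n k : Nat} {Γ : Set Fm} (α : Fm) : Lnk n k Γ (α.impl α) :=
  .mp (.mp (.a2 α (α.impl α) α) (.a1 α (α.impl α))) (.a1 α α)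

theorem ded {n k : Nat} {Γ : Set Fm} {α β : Fm} (h : Lnk n k (insert α Γ) β) :
    Lnk n k Γ (α.impl β) := by
  induction h with
  | prem hm =>
    rw [Set.mem_insert_iff] at hm
    rcases hm with rfl | hm
    · exact imp_id _
    · exact .mp (.a1 _ _) (.prem hm)
  | mp _ _ ih1 ih2 => exact .mp (.mp (.a2 _ _ _) ih1) ih2
  | a1 a b => exact .mp (.a1 _ _) (.a1 a b)
  | a2 a b c => exact .mp (.a1 _ _) (.a2 a b c)
  | a3 a b => exact .mp (.a1 _ _) (.a3 a b)
  | a4 a b => exact .mp (.a1 _ _) (.a4 a b)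
  | a5 a b => exact .mp (.a1 _ _) (.a5 a b)
  | a6 a b => exact .mp (.a1 _ _) (.a6 a b)
  | a7 a b => exact .mp (.a1 _ _) (.a7 a b)
  | a8 a b c => exact .mp (.a1 _ _) (.a8 a b c)
  | a9 a b => exact .mp (.a1 _ _) (.a9 a b)
  | tnd a => exact .mp (.a1 _ _) (.tnd a)
  | bc1 a b => exact .mp (.a1 _ _) (.bc1 a b)
  | ciw a => exact .mp (.a1 _ _) (.ciw a)
  | ccn a => exact .mp (.a1 _ _) (.ccn a)
  | cf a h => exact .mp (.a1 _ _) (.cf a h)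
  | ce a h => exact .mp (.a1 _ _) (.ce a h)
  | ip a j h1 h2 => exact .mp (.a1 _ _) (.ip a j h1 h2)

theorem hyp {n k : Nat} {Γ : Set Fm} {α : Fm} : Lnk n k (insert α Γ) α :=
  .prem (Set.mem_insert _ _)

theorem w {n k : Nat} {Γ : Set Fm} {α β : Fm} (h : Lnk n k Γ β) :
    Lnk n k (insert α Γ) β := weak (Set.subset_insert _ _) h

theorem comp {n k : Nat} {Γ : Set Fm} {a b c : Fm}
    (h1 : Lnk n k Γ (a.impl b)) (h2 : Lnk n k Γ (b.impl c)) : Lnk n k Γ (a.impl c) :=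
  ded (.mp (w h2) (.mp (w h1) hyp))

theorem orE {n k : Nat} {Γ : Set Fm} {a b c : Fm}
    (hd : Lnk n k Γ (a.disj b)) (h1 : Lnk n k Γ (a.impl c)) (h2 : Lnk n k Γ (b.impl c)) :
    Lnk n k Γ c :=
  .mp (.mp (.mp (.a8 a b c) h1) h2) hd

theorem andI {n k : Nat} {Γ : Set Fm} {a b : Fm}
    (h1 : Lnk n k Γ a) (h2 : Lnk n k Γ b) : Lnk n k Γ (a.conj b) :=
  .mp (.mp (.a5 a b) h1) h2

theorem circ_mono {n k : Nat} {Γ : Set Fm} {β γ : Fm}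
    (h1 : Lnk n k Γ ((γ.conj γ.neg).impl β))
    (h2 : Lnk n k Γ ((γ.conj γ.neg).impl β.neg)) :
    Lnk n k Γ (β.circ.impl γ.circ) := by
  apply ded
  apply orE (Lnk.ciw γ) (imp_id _)
  apply ded
  have hX : Lnk n k (insert (γ.conj γ.neg) (insert β.circ Γ)) (γ.conj γ.neg) := hyp
  have hb : Lnk n k (insert (γ.conj γ.neg) (insert β.circ Γ)) β := .mp (w (w h1)) hX
  have hnb : Lnk n k (insert (γ.conj γ.neg) (insert β.circ Γ)) β.neg := .mp (w (w h2)) hX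
  have hcb : Lnk n k (insert (γ.conj γ.neg) (insert β.circ Γ)) β.circ := w hyp
  exact .mp (.mp (.mp (.bc1 β γ.circ) hcb) hb) hnb

theorem aux (n k : Nat) (hk : 1 ≤ k) (α : Fm) :
    ∀ j, 1 ≤ j → j ≤ k → Lnk n k ∅ (Fm.biim (circN j α) (circN j α.neg))
  | 0, h, _ => absurd h (by omega)
  | 1, _, _ => by
    have hfwd : Lnk n k ∅ ((Fm.circ α).impl (Fm.circ α.neg)) :=
      circ_mono (comp (.a4 _ _) (.cf α hk)) (.a3 _ _)
    have hbwd : Lnk n k ∅ ((Fm.circ α.neg).impl (Fm.circ α)) :=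
      circ_mono (.a4 _ _) (comp (.a3 _ _) (.ce α hk))
    exact andI hfwd hbwd
  | (m+2), _, h => by
    have ih := aux n k hk α (m+1) (by omega) (by omega)
    set β := circN (m+1) α with hβ
    set γ := circN (m+1) α.neg with hγ
    have hbg : Lnk n k ∅ (β.impl γ) := .mp (.a3 _ _) ih
    have hgb : Lnk n k ∅ (γ.impl β) := .mp (.a4 _ _) ih
    have ipm : Lnk n k ∅ (Fm.biim γ.neg β.neg) := .ip α (m+1) (by omega) (by omega)
    have hngnb : Lnk n k ∅ (γ.neg.impl β.neg) := .mp (.a3 _ _) ipm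
    have hnbng : Lnk n k ∅ (β.neg.impl γ.neg) := .mp (.a4 _ _) ipm
    have hfwd : Lnk n k ∅ (β.circ.impl γ.circ) :=
      circ_mono (comp (.a3 _ _) hgb) (comp (.a4 _ _) hngnb)
    have hbwd : Lnk n k ∅ (γ.circ.impl β.circ) :=
      circ_mono (comp (.a3 _ _) hbg) (comp (.a4 _ _) hnbng)
    exact andI hfwd hbwd

end LnkAux

/-- For 1 ≤ j ≤ k, ⊢_{L_n^k} ∘^j α ↔ ∘^j ¬α. -/
theorem stmt18 (n k : Nat) (hk : 1 ≤ k) (α : Fm) (j : Nat) (hj1 : 1 ≤ j) (hj2 : j ≤ k) :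
    Lnk n k ∅ (Fm.biim (circN j α) (circN j α.neg)) := by
  exact LnkAux.aux n k hk α j hj1 hj2
end

section
/- Fixed Point Theorem for the hierarchy of Logics of Controlled Consistency: for every n ≥ 0 and every m ≥ n+2, the logics L_n^{n+1} and L_n^m coincide, i.e. for every set of formulas Γ and formula α, Γ ⊢_{L_n^{n+1}} α if and only if Γ ⊢_{L_n^m} α. -/
namespace Lnk

variable {n k m : Nat} {Γ Δ : Set Fm} {a b c : Fm}

theorem weaken (h : Lnk n k Γ a) (hs : Γ ⊆ Δ) : Lnk n k Δ a := by
  induction h with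
  | prem h => exact .prem (hs h)
  | mp _ _ ih1 ih2 => exact ih1.mp ih2
  | a1 α β => exact .a1 α β
  | a2 α β γ => exact .a2 α β γ
  | a3 α β => exact .a3 α β
  | a4 α β => exact .a4 α β
  | a5 α β => exact .a5 α β
  | a6 α β => exact .a6 α β
  | a7 α β => exact .a7 α β
  | a8 α β γ => exact .a8 α β γ
  | a9 α β => exact .a9 α β
  | tnd α => exact .tnd α
  | bc1 α β => exact .bc1 α β
  | ciw α => exact .ciw α
  | ccn α => exact .ccn α
  | cf α h1 => exact .cf α h1
  | ce α h1 => exact .ce α h1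
  | ip α j h1 h2 => exact .ip α j h1 h2

theorem impId : Lnk n k Γ (a.impl a) :=
  ((Lnk.a2 a (a.impl a) a).mp (.a1 a (a.impl a))).mp (.a1 a a)

theorem lift (h : Lnk n k Γ a) : Lnk n k Γ (b.impl a) := (Lnk.a1 a b).mp h

theorem dt (h : Lnk n k (insert b Γ) a) : Lnk n k Γ (b.impl a) := by
  induction h with
  | prem h =>
    rcases Set.mem_insert_iff.mp h with h | h
    · subst h; exact impId
    · exact lift (.prem h)
  | mp _ _ ih1 ih2 => exact ((Lnk.a2 _ _ _).mp ih1).mp ih2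
  | a1 α β => exact lift (.a1 α β)
  | a2 α β γ => exact lift (.a2 α β γ)
  | a3 α β => exact lift (.a3 α β)
  | a4 α β => exact lift (.a4 α β)
  | a5 α β => exact lift (.a5 α β)
  | a6 α β => exact lift (.a6 α β)
  | a7 α β => exact lift (.a7 α β)
  | a8 α β γ => exact lift (.a8 α β γ)
  | a9 α β => exact lift (.a9 α β)
  | tnd α => exact lift (.tnd α)
  | bc1 α β => exact lift (.bc1 α β)
  | ciw α => exact lift (.ciw α)
  | ccn α => exact lift (.ccn α)
  | cf α h1 => exact lift (.cf α h1)
  | ce α h1 => exact lift (.ce α h1)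
  | ip α j h1 h2 => exact lift (.ip α j h1 h2)

theorem andI (h1 : Lnk n k Γ a) (h2 : Lnk n k Γ b) : Lnk n k Γ (a.conj b) :=
  ((Lnk.a5 a b).mp h1).mp h2

theorem andE1 (h : Lnk n k Γ (a.conj b)) : Lnk n k Γ a := (Lnk.a3 a b).mp h

theorem andE2 (h : Lnk n k Γ (a.conj b)) : Lnk n k Γ b := (Lnk.a4 a b).mp h

theorem orE (h : Lnk n k Γ (a.disj b)) (h1 : Lnk n k (insert a Γ) c)
    (h2 : Lnk n k (insert b Γ) c) : Lnk n k Γ c :=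
  (((Lnk.a8 a b c).mp (dt h1)).mp (dt h2)).mp h

theorem expl (hc : Lnk n k Γ a.circ) (ha : Lnk n k Γ a) (hn : Lnk n k Γ a.neg) :
    Lnk n k Γ b :=
  (((Lnk.bc1 a b).mp hc).mp ha).mp hn

theorem mem_ins : Lnk n k (insert a Γ) a := .prem (Set.mem_insert _ _)

theorem wk (h : Lnk n k Γ a) : Lnk n k (insert b Γ) a :=
  weaken h (Set.subset_insert _ _)

end Lnk

theorem circN_add (i j : Nat) (a : Fm) : circN (i + j) a = circN i (circN j a) := by
  induction i with
  | zero => simp [circN]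
  | succ i ih => rw [Nat.succ_add]; simp [circN, ih]

theorem thmCirc {n k : Nat} {Γ : Set Fm} (j : Nat) (h : n + 2 ≤ j) (a : Fm) :
    Lnk n k Γ (circN j a) := by
  obtain ⟨t, rfl⟩ := Nat.exists_eq_add_of_le h
  rw [circN_add]
  exact .ccn _

/-- Forward direction of R: from ¬∘^{n+1}a derive ∘^n a ∧ ¬∘^n a. -/
theorem Rfwd {n k : Nat} {Γ : Set Fm} {a : Fm} (h : Lnk n k Γ (circN (n+1) a).neg) :
    Lnk n k Γ ((circN n a).conj (circN n a).neg) := by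
  refine Lnk.orE (Lnk.ciw (circN n a)) ?_ Lnk.mem_ins
  exact Lnk.expl (a := circN (n+1) a) (thmCirc (n+2) (by omega) a) Lnk.mem_ins (Lnk.wk h)

/-- Backward direction of R: from ∘^n a ∧ ¬∘^n a derive ¬∘^{n+1}a. -/
theorem Rbwd {n k : Nat} {Γ : Set Fm} {a : Fm}
    (h : Lnk n k Γ ((circN n a).conj (circN n a).neg)) :
    Lnk n k Γ (circN (n+1) a).neg := by
  refine Lnk.orE (Lnk.tnd (circN (n+1) a)) ?_ Lnk.mem_ins
  exact Lnk.expl (a := circN n a) Lnk.mem_ins (Lnk.andE1 (Lnk.wk h)) (Lnk.andE2 (Lnk.wk h))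

/-- Q: for j < k, the contradiction pairs at level j for a and ¬a are interderivable. -/
theorem Qlem {n k : Nat} (hk : 1 ≤ k) :
    ∀ j, j < k → ∀ (Γ : Set Fm) (a : Fm),
    (Lnk n k Γ ((circN j a).conj (circN j a).neg) →
      Lnk n k Γ ((circN j a.neg).conj (circN j a.neg).neg)) ∧
    (Lnk n k Γ ((circN j a.neg).conj (circN j a.neg).neg) →
      Lnk n k Γ ((circN j a).conj (circN j a).neg)) := by
  intro j
  induction j with
  | zero =>
    intro _ Γ a
    constructor
    · intro h
      exact Lnk.andI (Lnk.andE2 h) ((Lnk.ce a hk).mp (Lnk.andE1 h))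
    · intro h
      exact Lnk.andI ((Lnk.cf a hk).mp (Lnk.andE2 h)) (Lnk.andE1 h)
  | succ j ih =>
    intro hjk Γ a
    have hip := Lnk.ip (n := n) (k := k) (Γ := Γ) a (j+1) (by omega) hjk
    constructor
    · intro h
      have hnD : Lnk n k Γ (circN (j+1) a.neg).neg :=
        (Lnk.andE2 hip).mp (Lnk.andE2 h)
      refine Lnk.andI ?_ hnD
      refine Lnk.orE (Lnk.ciw (circN j a.neg)) Lnk.mem_ins ?_
      have hpair := (ih (by omega)
        (insert ((circN j a.neg).conj (circN j a.neg).neg) Γ) a).2 Lnk.mem_ins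
      exact Lnk.expl (a := circN j a) (Lnk.andE1 (Lnk.wk h))
        (Lnk.andE1 hpair) (Lnk.andE2 hpair)
    · intro h
      have hnC : Lnk n k Γ (circN (j+1) a).neg :=
        (Lnk.andE1 hip).mp (Lnk.andE2 h)
      refine Lnk.andI ?_ hnC
      refine Lnk.orE (Lnk.ciw (circN j a)) Lnk.mem_ins ?_
      have hpair := (ih (by omega)
        (insert ((circN j a).conj (circN j a).neg) Γ) a).1 Lnk.mem_ins
      exact Lnk.expl (a := circN j a.neg) (Lnk.andE1 (Lnk.wk h))
        (Lnk.andE1 hpair) (Lnk.andE2 hpair)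

/-- The ip^j axioms of L_n^m are derivable in L_n^{n+1}. -/
theorem ipDeriv {n : Nat} {Γ : Set Fm} {j : Nat} (hj1 : 1 ≤ j) (a : Fm) :
    Lnk n (n+1) Γ (Fm.biim (circN j a.neg).neg (circN j a).neg) := by
  rcases Nat.lt_or_ge j (n+1) with hlt | hge
  · exact .ip a j hj1 hlt
  rcases Nat.lt_or_ge j (n+2) with hlt2 | hge2
  · -- j = n+1
    have hj : j = n + 1 := by omega
    subst hj
    refine Lnk.andI (Lnk.dt ?_) (Lnk.dt ?_)
    · exact Rbwd ((Qlem (by omega) n (by omega) _ a).2 (Rfwd Lnk.mem_ins))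
    · exact Rbwd (a := a.neg) ((Qlem (by omega) n (by omega) _ a).1 (Rfwd Lnk.mem_ins))
  · -- j ≥ n+2 : both sides explode
    refine Lnk.andI (Lnk.dt ?_) (Lnk.dt ?_)
    · exact Lnk.expl (a := circN j a.neg) (thmCirc (j+1) (by omega) _)
        (thmCirc j (by omega) _) Lnk.mem_ins
    · exact Lnk.expl (a := circN j a) (thmCirc (j+1) (by omega) _)
        (thmCirc j (by omega) _) Lnk.mem_ins

theorem toLow {n m : Nat} {Γ : Set Fm} {a : Fm} (_hm : n + 2 ≤ m)
    (h : Lnk n m Γ a) : Lnk n (n+1) Γ a := by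
  induction h with
  | prem h => exact .prem h
  | mp _ _ ih1 ih2 => exact ih1.mp ih2
  | a1 α β => exact .a1 α β
  | a2 α β γ => exact .a2 α β γ
  | a3 α β => exact .a3 α β
  | a4 α β => exact .a4 α β
  | a5 α β => exact .a5 α β
  | a6 α β => exact .a6 α β
  | a7 α β => exact .a7 α β
  | a8 α β γ => exact .a8 α β γ
  | a9 α β => exact .a9 α β
  | tnd α => exact .tnd α
  | bc1 α β => exact .bc1 α β
  | ciw α => exact .ciw α
  | ccn α => exact .ccn α
  | cf α _ => exact .cf α (by omega)
  | ce α _ => exact .ce α (by omega)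
  | ip α j h1 h2 => exact ipDeriv h1 α

theorem toHigh {n m : Nat} {Γ : Set Fm} {a : Fm} (hm : n + 2 ≤ m)
    (h : Lnk n (n+1) Γ a) : Lnk n m Γ a := by
  induction h with
  | prem h => exact .prem h
  | mp _ _ ih1 ih2 => exact ih1.mp ih2
  | a1 α β => exact .a1 α β
  | a2 α β γ => exact .a2 α β γ
  | a3 α β => exact .a3 α β
  | a4 α β => exact .a4 α β
  | a5 α β => exact .a5 α β
  | a6 α β => exact .a6 α β
  | a7 α β => exact .a7 α β
  | a8 α β γ => exact .a8 α β γ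
  | a9 α β => exact .a9 α β
  | tnd α => exact .tnd α
  | bc1 α β => exact .bc1 α β
  | ciw α => exact .ciw α
  | ccn α => exact .ccn α
  | cf α _ => exact .cf α (by omega)
  | ce α _ => exact .ce α (by omega)
  | ip α j h1 h2 => exact .ip α j h1 (by omega)

/-- Fixed Point Theorem: for every n ≥ 0 and m ≥ n+2, L_n^{n+1} = L_n^m. -/
theorem stmt19 (n m : Nat) (hm : n + 2 ≤ m) (Γ : Set Fm) (α : Fm) :
    Lnk n (n + 1) Γ α ↔ Lnk n m Γ α := by
  exact ⟨toHigh hm, toLow hm⟩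
end
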